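/- Let n ≥ 3 and let c > 0 satisfy 2c + (2/3)c^2 − 2c/(3(n−2)) > 1, and set d = ⌈√(c(n−2))⌉. Then there exists a real polynomial q in n variables, of degree d if d is even and of degree d+1 if d is odd, such that |NAE_n(x) − q(x)| ≤ 1/3 for every x ∈ {0,1}^n. -/

import Mathlib

noncomputable section

/-- The not-all-equal function `NAE_n` as a real-valued function on `{0,1}^n`:
it is `0` if all the bits are equal and `1` otherwise. -/
def naeVal {n : ℕ} (x : Fin n → Bool) : ℝ :=
  if ∀ i j : Fin n, x i = x j then 0 else 1

/-- Interpret a Boolean value as a real number (true ↦ 1, false ↦ 0). -/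
def boolToReal (b : Bool) : ℝ := if b then 1 else 0


open Polynomial Real

private lemma mono_aux {f f' : ℝ → ℝ} (hf : ∀ y, HasDerivAt f (f' y) y)
    (h0 : ∀ y, 0 ≤ y → 0 ≤ f' y) {x : ℝ} (hx : 0 ≤ x) : f 0 ≤ f x := by
  have hmono : MonotoneOn f (Set.Ici (0:ℝ)) := by
    apply monotoneOn_of_deriv_nonneg (convex_Ici 0)
    · exact fun y _ => (hf y).differentiableAt.continuousAt.continuousWithinAt
    · intro y _
      exact (hf y).differentiableAt.differentiableWithinAt
    · intro y hy
      rw [interior_Ici] at hy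
      rw [(hf y).deriv]
      exact h0 y (le_of_lt hy)
  exact hmono (Set.self_mem_Ici) (Set.mem_Ici.mpr hx) hx

private lemma sinh_le_mul_cosh {x : ℝ} (hx : 0 ≤ x) : Real.sinh x ≤ x * Real.cosh x := by
  have key : (0:ℝ) * Real.cosh 0 - Real.sinh 0 ≤ x * Real.cosh x - Real.sinh x := by
    apply mono_aux (f := fun y => y * Real.cosh y - Real.sinh y)
      (f' := fun y => y * Real.sinh y) _ _ hx
    · intro y
      have h1 : HasDerivAt (fun y : ℝ => y * Real.cosh y) (1 * Real.cosh y + y * Real.sinh y) y :=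
        (hasDerivAt_id y).mul (Real.hasDerivAt_cosh y)
      have h2 := h1.sub (Real.hasDerivAt_sinh y)
      exact h2.congr_deriv (by ring)
    · intro y hy
      exact mul_nonneg hy (Real.sinh_nonneg_iff.mpr hy)
  simp at key
  linarith

private lemma cosh_quad_lower (x : ℝ) : 1 + x^2/2 ≤ Real.cosh x := by
  have h1 : Real.cosh x = Real.cosh (2*(x/2)) := by rw [show 2*(x/2) = x by ring]
  have h2 : Real.cosh (2*(x/2)) = Real.cosh (x/2)^2 + Real.sinh (x/2)^2 := Real.cosh_two_mul _
  have h3 : Real.cosh (x/2)^2 - Real.sinh (x/2)^2 = 1 := Real.cosh_sq_sub_sinh_sq _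
  have h4 : |x/2| ≤ |Real.sinh (x/2)| := by
    rw [Real.abs_sinh]
    exact Real.self_le_sinh_iff.mpr (abs_nonneg _)
  have h5 : (x/2)^2 ≤ Real.sinh (x/2)^2 := by
    rw [← sq_abs (x/2), ← sq_abs (Real.sinh (x/2))]
    exact pow_le_pow_left₀ (abs_nonneg _) h4 2
  nlinarith [h5, h2, h3, h1]

/-- `cosh x (1 - x²/12) ≤ 1 + (5/12) x²` for `x ≥ 0`. -/
private lemma cosh_upper12 {x : ℝ} (hx : 0 ≤ x) :
    Real.cosh x * (1 - x^2/12) ≤ 1 + 5/12*x^2 := by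
  -- g2
  have hg2 : ∀ y : ℝ, 0 ≤ y → 0 ≤ 5/6 - 5/6*Real.cosh y + y/3*Real.sinh y + y^2/12*Real.cosh y := by
    intro y hy
    have key : (5/6 - 5/6*Real.cosh 0 + 0/3*Real.sinh 0 + 0^2/12*Real.cosh 0) ≤
        (5/6 - 5/6*Real.cosh y + y/3*Real.sinh y + y^2/12*Real.cosh y) := by
      apply mono_aux
        (f := fun y => 5/6 - 5/6*Real.cosh y + y/3*Real.sinh y + y^2/12*Real.cosh y)
        (f' := fun y => -(1/2)*Real.sinh y + y/2*Real.cosh y + y^2/12*Real.sinh y) _ _ hy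
      · intro y
        have hc := Real.hasDerivAt_cosh y
        have hs := Real.hasDerivAt_sinh y
        have hid := hasDerivAt_id y
        have hsq : HasDerivAt (fun y : ℝ => y^2) (2*y) y := by
          simpa using hasDerivAt_pow 2 y
        have t1 : HasDerivAt (fun y : ℝ => 5/6 - 5/6*Real.cosh y)
            (0 - 5/6*Real.sinh y) y := (hasDerivAt_const y (5/6:ℝ)).sub (hc.const_mul (5/6))
        have t2 : HasDerivAt (fun y : ℝ => y/3*Real.sinh y)
            ((1/3)*Real.sinh y + y/3*Real.cosh y) y := by
          have := ((hid.div_const 3).mul hs)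
          exact this
        have t3 : HasDerivAt (fun y : ℝ => y^2/12*Real.cosh y)
            ((2*y/12)*Real.cosh y + y^2/12*Real.sinh y) y := by
          have := ((hsq.div_const 12).mul hc)
          exact this
        have := (t1.add t2).add t3
        exact this.congr_deriv (by ring)
      · intro y hy
        have h1 := sinh_le_mul_cosh hy
        have h2 : 0 ≤ y^2/12*Real.sinh y := by
          apply mul_nonneg (by positivity) (Real.sinh_nonneg_iff.mpr hy)
        nlinarith
    simp at key
    linarith [key]
  -- g1
  have hg1 : ∀ y : ℝ, 0 ≤ y → 0 ≤ 5/6*y - Real.sinh y + y^2/12*Real.sinh y + y/6*Real.cosh y := by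
    intro y hy
    have key : (5/6*0 - Real.sinh 0 + 0^2/12*Real.sinh 0 + 0/6*Real.cosh 0) ≤
        (5/6*y - Real.sinh y + y^2/12*Real.sinh y + y/6*Real.cosh y) := by
      apply mono_aux
        (f := fun y => 5/6*y - Real.sinh y + y^2/12*Real.sinh y + y/6*Real.cosh y)
        (f' := fun y => 5/6 - 5/6*Real.cosh y + y/3*Real.sinh y + y^2/12*Real.cosh y) _ _ hy
      · intro y
        have hc := Real.hasDerivAt_cosh y
        have hs := Real.hasDerivAt_sinh y
        have hid := hasDerivAt_id y
        have hsq : HasDerivAt (fun y : ℝ => y^2) (2*y) y := by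
          simpa using hasDerivAt_pow 2 y
        have t1 : HasDerivAt (fun y : ℝ => 5/6*y) (5/6) y := by
          simpa using hid.const_mul (5/6:ℝ)
        have t2 : HasDerivAt (fun y : ℝ => y^2/12*Real.sinh y)
            ((2*y/12)*Real.sinh y + y^2/12*Real.cosh y) y := by
          exact ((hsq.div_const 12).mul hs)
        have t3 : HasDerivAt (fun y : ℝ => y/6*Real.cosh y)
            ((1/6)*Real.cosh y + y/6*Real.sinh y) y := by
          exact ((hid.div_const 6).mul hc)
        have := ((t1.sub hs).add t2).add t3
        exact this.congr_deriv (by ring)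
      · exact hg2
    simp at key
    linarith [key]
  -- g0
  have key : (1 + 5/12*(0:ℝ)^2 - Real.cosh 0 * (1 - 0^2/12)) ≤
      (1 + 5/12*x^2 - Real.cosh x * (1 - x^2/12)) := by
    apply mono_aux
      (f := fun y => 1 + 5/12*y^2 - Real.cosh y * (1 - y^2/12))
      (f' := fun y => 5/6*y - Real.sinh y + y^2/12*Real.sinh y + y/6*Real.cosh y) _ _ hx
    · intro y
      have hc := Real.hasDerivAt_cosh y
      have hs := Real.hasDerivAt_sinh y
      have hsq : HasDerivAt (fun y : ℝ => y^2) (2*y) y := by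
        simpa using hasDerivAt_pow 2 y
      have t1 : HasDerivAt (fun y : ℝ => 1 + 5/12*y^2) (5/12*(2*y)) y := by
        exact (hsq.const_mul (5/12:ℝ)).const_add 1
      have t2 : HasDerivAt (fun y : ℝ => Real.cosh y * (1 - y^2/12))
          (Real.sinh y * (1 - y^2/12) + Real.cosh y * (0 - 2*y/12)) y := by
        exact hc.mul ((hasDerivAt_const y (1:ℝ)).sub (hsq.div_const 12))
      have := t1.sub t2
      exact this.congr_deriv (by ring)
    · exact hg1
  simp at key
  linarith [key]

private lemma cosh_dbl (u : ℝ) : Real.cosh (2*u) = 2*(Real.cosh u)^2 - 1 := by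
  have h2 := Real.cosh_two_mul u
  have h3 := Real.cosh_sq_sub_sinh_sq u
  linarith

private lemma dbl_mono {a u : ℝ} (ha : 1 ≤ a) (h : a ≤ Real.cosh u) :
    2*a^2 - 1 ≤ Real.cosh (2*u) := by
  rw [cosh_dbl]
  nlinarith

private lemma two_le_cosh_lam : (2:ℝ) ≤ Real.cosh (659/500) := by
  have s0 : (128434281/128000000 : ℝ) ≤ Real.cosh (659/8000) := by
    have := cosh_quad_lower (659/8000)
    norm_num at this ⊢
    linarith
  have s1 : 2*(128434281/128000000:ℝ)^2 - 1 ≤ Real.cosh (659/4000) := by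
    rw [show (659/4000:ℝ) = 2*(659/8000) by norm_num]
    exact dbl_mono (by norm_num) s0
  have s2 := dbl_mono (a := 2*(128434281/128000000:ℝ)^2 - 1) (by norm_num) s1
  rw [show 2*(659/4000:ℝ) = 659/2000 by norm_num] at s2
  have s3 := dbl_mono (a := 2*(2*(128434281/128000000:ℝ)^2 - 1)^2 - 1) (by norm_num) s2
  rw [show 2*(659/2000:ℝ) = 659/1000 by norm_num] at s3
  have s4 := dbl_mono (a := 2*(2*(2*(128434281/128000000:ℝ)^2 - 1)^2 - 1)^2 - 1)
    (by norm_num) s3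
  rw [show 2*(659/1000:ℝ) = 659/500 by norm_num] at s4
  refine le_trans ?_ s4
  norm_num

-- Chebyshev eval cosh
private lemma T_eval_cosh : ∀ (k : ℕ) (t : ℝ),
    (Polynomial.Chebyshev.T ℝ (k:ℤ)).eval (Real.cosh t) = Real.cosh (k*t) := by
  have key : ∀ a b : ℝ, Real.cosh (a+b) + Real.cosh (a-b) = 2*Real.cosh a*Real.cosh b := by
    intro a b
    rw [Real.cosh_add, Real.cosh_sub]
    ring
  intro k
  induction k using Nat.twoStepInduction with
  | zero => intro t; simp [Polynomial.Chebyshev.T_zero]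
  | one => intro t; simp [Polynomial.Chebyshev.T_one]
  | more k ih1 ih2 =>
    intro t
    have hcast : ((k+2:ℕ):ℤ) = (k:ℤ)+2 := by push_cast; ring
    rw [hcast, Polynomial.Chebyshev.T_add_two]
    have e1 : ((k:ℤ)+1) = ((k+1:ℕ):ℤ) := by push_cast; ring
    simp only [eval_sub, eval_mul, eval_ofNat, eval_X, e1, ih1 t, ih2 t]
    have hk := key (((k:ℝ)+1)*t) t
    have e2 : ((k:ℝ)+1)*t + t = ((k:ℝ)+2)*t := by ring
    have e3 : ((k:ℝ)+1)*t - t = (k:ℝ)*t := by ring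
    rw [e2, e3] at hk
    push_cast
    linarith

private lemma T_abs_le (k : ℕ) (y : ℝ) (h1 : -1 ≤ y) (h2 : y ≤ 1) :
    |(Polynomial.Chebyshev.T ℝ (k:ℤ)).eval y| ≤ 1 := by
  have hy : Real.cos (Real.arccos y) = y := Real.cos_arccos h1 h2
  rw [← hy, Polynomial.Chebyshev.T_real_cos]
  exact Real.abs_cos_le_one _

private lemma T_deg : ∀ k : ℕ, (Polynomial.Chebyshev.T ℝ ((k:ℤ)+1)).natDegree = k+1 ∧
    (Polynomial.Chebyshev.T ℝ ((k:ℤ)+1)).leadingCoeff = 2^k := by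
  intro k
  induction k using Nat.twoStepInduction with
  | zero => simp [Polynomial.Chebyshev.T_one]
  | one =>
    rw [show ((1:ℕ):ℤ)+1 = 2 by norm_num, Polynomial.Chebyshev.T_two]
    have hd : (2*X^2 - 1 : ℝ[X]).natDegree = 2 := by compute_degree!
    refine ⟨hd, ?_⟩
    rw [Polynomial.leadingCoeff, hd]
    simp [Polynomial.coeff_one]
  | more k ih1 ih2 =>
    obtain ⟨hd1, hl1⟩ := ih1
    obtain ⟨hd2, hl2⟩ := ih2
    have hcast : ((k+2:ℕ):ℤ)+1 = ((k:ℤ)+1) + 2 := by push_cast; ring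
    rw [hcast, Polynomial.Chebyshev.T_add_two]
    have e1 : (((k:ℤ)+1)+1) = ((k+1:ℕ):ℤ)+1 := by push_cast; ring
    rw [e1]
    set q := Polynomial.Chebyshev.T ℝ (((k+1:ℕ):ℤ)+1) with hq
    set r := Polynomial.Chebyshev.T ℝ ((k:ℤ)+1) with hr
    have hq0 : q ≠ 0 := by
      intro h
      rw [Polynomial.leadingCoeff, h] at hl2
      simp at hl2
      exact (pow_ne_zero (k+1) (two_ne_zero)) hl2.symm
    have h2X : (2*X : ℝ[X]).natDegree = 1 := by compute_degree!
    have h2X0 : (2*X : ℝ[X]) ≠ 0 := fun h => by simpa [h] using h2X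
    have hmuldeg : (2*X*q).natDegree = k+3 := by
      rw [natDegree_mul h2X0 hq0, h2X, hd2]
      omega
    have hlt : r.natDegree < (2*X*q).natDegree := by
      rw [hmuldeg, hd1]; omega
    constructor
    · rw [natDegree_sub_eq_left_of_natDegree_lt hlt, hmuldeg]
    · have h0 : r.coeff (k+3) = 0 :=
        Polynomial.coeff_eq_zero_of_natDegree_lt (by rw [hd1]; omega)
      have hlc2 : (2*X : ℝ[X]).leadingCoeff = 2 := by
        rw [show (2:ℝ[X]) = C 2 from (map_ofNat C 2).symm, leadingCoeff_mul, leadingCoeff_C,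
          leadingCoeff_X, mul_one]
      have hlc : (2*X*q).leadingCoeff = 2^(k+2) := by
        rw [leadingCoeff_mul, hlc2, hl2]; ring
      rw [Polynomial.leadingCoeff, natDegree_sub_eq_left_of_natDegree_lt hlt, hmuldeg,
        coeff_sub, h0, sub_zero, ← hmuldeg, Polynomial.coeff_natDegree, hlc]

private lemma natDegree_mv_aeval_le {n : ℕ} (f : Fin n → Polynomial ℝ)
    (hf : ∀ i, (f i).natDegree ≤ 1) (r : MvPolynomial (Fin n) ℝ) :
    ((MvPolynomial.aeval f) r).natDegree ≤ r.totalDegree := by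
  rw [MvPolynomial.aeval_def, MvPolynomial.eval₂_eq]
  apply Polynomial.natDegree_sum_le_of_forall_le
  intro dm hdm
  apply le_trans (Polynomial.natDegree_mul_le)
  have h1 : (algebraMap ℝ ℝ[X] (MvPolynomial.coeff dm r)).natDegree = 0 := by
    simp [Polynomial.algebraMap_apply]
  rw [h1, zero_add]
  apply le_trans (Polynomial.natDegree_prod_le _ _)
  calc ∑ i ∈ dm.support, ((f i)^(dm i)).natDegree
      ≤ ∑ i ∈ dm.support, dm i := by
        apply Finset.sum_le_sum
        intro i _
        calc ((f i)^(dm i)).natDegree ≤ dm i * (f i).natDegree := Polynomial.natDegree_pow_le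
          _ ≤ dm i * 1 := Nat.mul_le_mul_left _ (hf i)
          _ = dm i := Nat.mul_one _
    _ ≤ r.totalDegree := MvPolynomial.le_totalDegree hdm

private lemma totalDegree_poly_aeval_le {n : ℕ} (S : MvPolynomial (Fin n) ℝ)
    (hS : S.totalDegree ≤ 1) (P : ℝ[X]) :
    ((Polynomial.aeval S) P).totalDegree ≤ P.natDegree := by
  rw [Polynomial.aeval_eq_sum_range]
  apply le_trans (MvPolynomial.totalDegree_finset_sum _ _)
  apply Finset.sup_le
  intro i hi
  rw [Finset.mem_range] at hi
  calc (P.coeff i • S^i).totalDegree ≤ (S^i).totalDegree := MvPolynomial.totalDegree_smul_le _ _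
    _ ≤ i * S.totalDegree := MvPolynomial.totalDegree_pow _ _
    _ ≤ i * 1 := Nat.mul_le_mul_left _ hS
    _ ≤ P.natDegree := by omega

/-- Uniform regime: `m = 1` or `m ≥ 16`. -/
private lemma uniform_ineq {m c : ℝ} (hm : m = 1 ∨ 16 ≤ m) (hm1 : 1 ≤ m) (hc : 0 < c)
    (h : 2*c + 2/3*c^2 - 2*c/(3*m) > 1) : (659/500:ℝ)^2*(6*m+2) ≤ 24*(c*m) := by
  rcases hm with rfl | hm16
  · norm_num at h ⊢
    nlinarith
  · have hm0 : (0:ℝ) < m := by linarith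
    have h3 : 6*c*m + 2*c^2*m - 2*c > 3*m := by
      have hh := mul_lt_mul_of_pos_right h (show (0:ℝ) < 3*m by linarith)
      have he : (2*c + 2/3*c^2 - 2*c/(3*m))*(3*m) = 6*c*m + 2*c^2*m - 2*c := by
        field_simp
        ring
      rw [he] at hh
      linarith
    set p : ℝ := 434281*(3*m+1)/(3000000*m) with hp
    have hp0 : 0 < p := by positivity
    have hQp : 6*p*m + 2*p^2*m - 2*p ≤ 3*m := by
      have heq : 6*p*m + 2*p^2*m - 2*p
          = (6*(434281*(3*m+1))*m*(3000000*m) + 2*(434281*(3*m+1))^2*m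
             - 2*(434281*(3*m+1))*(3000000*m))/(3000000*m)^2 := by
        rw [hp]; field_simp
      rw [heq, div_le_iff₀ (by positivity)]
      nlinarith [hm16, hm0.le, sq_nonneg (m-16),
        mul_nonneg (mul_nonneg (sub_nonneg.mpr hm16) (sub_nonneg.mpr hm16)) hm0.le,
        mul_nonneg (sub_nonneg.mpr hm16) hm0.le]
    have hcp : p < c := by
      by_contra hle
      push_neg at hle
      have hfac : 0 ≤ (p - c)*(6*m - 2 + 2*m*(p+c)) :=
        mul_nonneg (sub_nonneg.mpr hle) (by nlinarith [hp0, hc, hm16])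
      nlinarith [hfac, h3, hQp]
    have hfin : 434281*(3*m+1) < 3000000*(c*m) := by
      have := mul_lt_mul_of_pos_right hcp (show (0:ℝ) < 3000000*m by linarith)
      have he2 : p*(3000000*m) = 434281*(3*m+1) := by
        rw [hp]; field_simp
      nlinarith [this, he2]
    nlinarith [hfin]

private lemma special_case {k : ℕ} (hk1 : 1 ≤ k) {c m θ : ℝ} (hm : 0 < m) (hθ0 : 0 ≤ θ)
    (hθsq : 24 ≤ θ^2*(6*m+2)) (hck : ((k:ℝ)-1)^2 < c*m)
    (hknum : (659/500:ℝ)^2*(6*m+2) ≤ (k:ℝ)^2*24) {d : ℕ}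
    (hd : d = ⌈Real.sqrt (c*m)⌉₊) : (659/500:ℝ) ≤ (d:ℝ)*θ := by
  have hkd : k ≤ d := by
    rw [hd]
    have h1 : ((k-1:ℕ):ℝ) < Real.sqrt (c*m) := by
      have hk1' : (1:ℝ) ≤ (k:ℝ) := by exact_mod_cast hk1
      have hcast : ((k-1:ℕ):ℝ) = (k:ℝ)-1 := by
        rw [Nat.cast_sub hk1]; norm_num
      rw [hcast]
      exact (Real.lt_sqrt (by linarith)).mpr hck
    have := Nat.lt_ceil.mpr h1
    omega
  have hm62 : (0:ℝ) < 6*m+2 := by linarith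
  have hkθ : (659/500:ℝ) ≤ (k:ℝ)*θ := by
    have h2 : (659/500:ℝ)^2*(6*m+2) ≤ ((k:ℝ)*θ)^2*(6*m+2) := by
      calc (659/500:ℝ)^2*(6*m+2) ≤ (k:ℝ)^2*24 := hknum
        _ ≤ (k:ℝ)^2*(θ^2*(6*m+2)) := by
            apply mul_le_mul_of_nonneg_left hθsq (by positivity)
        _ = ((k:ℝ)*θ)^2*(6*m+2) := by ring
    have h3 : (659/500:ℝ)^2 ≤ ((k:ℝ)*θ)^2 := le_of_mul_le_mul_right h2 hm62
    nlinarith [mul_nonneg (Nat.cast_nonneg k : (0:ℝ) ≤ k) hθ0]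
  calc (659/500:ℝ) ≤ (k:ℝ)*θ := hkθ
    _ ≤ (d:ℝ)*θ := by
      apply mul_le_mul_of_nonneg_right _ hθ0
      exact_mod_cast hkd

set_option maxHeartbeats 1000000 in
private lemma core (n : ℕ) (hn : 3 ≤ n) (c : ℝ) (hc : 0 < c)
    (hineq : 2 * c + (2 / 3) * c ^ 2 - 2 * c / (3 * ((n : ℝ) - 2)) > 1)
    (θ : ℝ) (hθ0 : 0 ≤ θ) (hθsq : 24 ≤ θ^2*(6*((n:ℝ)-2)+2))
    (d : ℕ) (hd : d = ⌈Real.sqrt (c*((n:ℝ)-2))⌉₊) : (659/500:ℝ) ≤ (d:ℝ)*θ := by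
  by_cases hsp : 4 ≤ n ∧ n ≤ 17
  · obtain ⟨h4, h17⟩ := hsp
    norm_num at hineq
    obtain rfl|rfl|rfl|rfl|rfl|rfl|rfl|rfl|rfl|rfl|rfl|rfl|rfl|rfl : n = 4 ∨ n = 5 ∨ n = 6 ∨ n = 7 ∨ n = 8 ∨ n = 9 ∨ n = 10 ∨ n = 11 ∨ n = 12 ∨ n = 13 ∨ n = 14 ∨ n = 15 ∨ n = 16 ∨ n = 17 := by omega
    · exact special_case (k := 2) (by norm_num) (by norm_num) hθ0
          hθsq (by norm_num; nlinarith [hineq, hc]) (by norm_num) hd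
    · exact special_case (k := 2) (by norm_num) (by norm_num) hθ0
          hθsq (by norm_num; nlinarith [hineq, hc]) (by norm_num) hd
    · exact special_case (k := 2) (by norm_num) (by norm_num) hθ0
          hθsq (by norm_num; nlinarith [hineq, hc]) (by norm_num) hd
    · exact special_case (k := 2) (by norm_num) (by norm_num) hθ0
          hθsq (by norm_num; nlinarith [hineq, hc]) (by norm_num) hd
    · exact special_case (k := 2) (by norm_num) (by norm_num) hθ0
          hθsq (by norm_num; nlinarith [hineq, hc]) (by norm_num) hd
    · exact special_case (k := 2) (by norm_num) (by norm_num) hθ0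
          hθsq (by norm_num; nlinarith [hineq, hc]) (by norm_num) hd
    · exact special_case (k := 2) (by norm_num) (by norm_num) hθ0
          hθsq (by norm_num; nlinarith [hineq, hc]) (by norm_num) hd
    · exact special_case (k := 3) (by norm_num) (by norm_num) hθ0
          hθsq (by norm_num; nlinarith [hineq, hc]) (by norm_num) hd
    · exact special_case (k := 3) (by norm_num) (by norm_num) hθ0
          hθsq (by norm_num; nlinarith [hineq, hc]) (by norm_num) hd
    · exact special_case (k := 3) (by norm_num) (by norm_num) hθ0
          hθsq (by norm_num; nlinarith [hineq, hc]) (by norm_num) hd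
    · exact special_case (k := 3) (by norm_num) (by norm_num) hθ0
          hθsq (by norm_num; nlinarith [hineq, hc]) (by norm_num) hd
    · exact special_case (k := 3) (by norm_num) (by norm_num) hθ0
          hθsq (by norm_num; nlinarith [hineq, hc]) (by norm_num) hd
    · exact special_case (k := 3) (by norm_num) (by norm_num) hθ0
          hθsq (by norm_num; nlinarith [hineq, hc]) (by norm_num) hd
    · exact special_case (k := 3) (by norm_num) (by norm_num) hθ0
          hθsq (by norm_num; nlinarith [hineq, hc]) (by norm_num) hd
  · have hm1 : (1:ℝ) ≤ (n:ℝ)-2 := by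
      have : (3:ℝ) ≤ (n:ℝ) := by exact_mod_cast hn
      linarith
    have hun : ((n:ℝ)-2) = 1 ∨ 16 ≤ ((n:ℝ)-2) := by
      have : n = 3 ∨ 18 ≤ n := by omega
      rcases this with rfl | h18
      · left; norm_num
      · right
        have : (18:ℝ) ≤ (n:ℝ) := by exact_mod_cast h18
        linarith
    set m : ℝ := (n:ℝ)-2 with hmdef
    have hm0 : (0:ℝ) < m := by linarith
    have hcm : (0:ℝ) ≤ c*m := by positivity
    have key := uniform_ineq hun hm1 hc (by linarith [hineq])
    set s : ℝ := Real.sqrt (c*m) with hsdef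
    have hs0 : 0 ≤ s := Real.sqrt_nonneg _
    have hs2 : s^2 = c*m := Real.sq_sqrt hcm
    have hsd : s ≤ (d:ℝ) := by rw [hd]; exact Nat.le_ceil s
    have h62 : (0:ℝ) < 6*m+2 := by linarith
    have hsq : (659/500:ℝ)^2 ≤ (s*θ)^2 := by
      have h1 : 24*(c*m) ≤ (c*m*θ^2)*(6*m+2) := by nlinarith [mul_le_mul_of_nonneg_left hθsq hcm]
      have h2 : (659/500:ℝ)^2*(6*m+2) ≤ ((s*θ)^2)*(6*m+2) := by
        calc (659/500:ℝ)^2*(6*m+2) ≤ 24*(c*m) := key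
          _ ≤ (c*m*θ^2)*(6*m+2) := h1
          _ = ((s*θ)^2)*(6*m+2) := by rw [← hs2]; ring
      exact le_of_mul_le_mul_right h2 h62
    have hsθ : (659/500:ℝ) ≤ s*θ := by
      rw [show (659/500:ℝ) = Real.sqrt ((659/500)^2) from (Real.sqrt_sq (by norm_num)).symm,
        show s*θ = Real.sqrt ((s*θ)^2) from (Real.sqrt_sq (mul_nonneg hs0 hθ0)).symm]
      exact Real.sqrt_le_sqrt hsq
    calc (659/500:ℝ) ≤ s*θ := hsθ
      _ ≤ (d:ℝ)*θ := mul_le_mul_of_nonneg_right hsd hθ0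

set_option maxHeartbeats 1000000 in
/-- Let `n ≥ 3` and `c > 0` satisfy `2c + (2/3)c² − 2c/(3(n−2)) > 1`, and
`d = ⌈√(c(n−2))⌉`. Then there is a real polynomial in `n` variables, of degree `d`
if `d` is even and `d + 1` otherwise, that `1/3`-approximates `NAE_n`. -/
theorem nae_approximation (n : ℕ) (hn : 3 ≤ n) (c : ℝ) (hc : 0 < c)
    (hineq : 2 * c + (2 / 3) * c ^ 2 - 2 * c / (3 * ((n : ℝ) - 2)) > 1)
    (d : ℕ) (hd : d = ⌈Real.sqrt (c * ((n : ℝ) - 2))⌉₊) :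
    ∃ q : MvPolynomial (Fin n) ℝ,
      q.totalDegree = (if Even d then d else d + 1) ∧
      ∀ x : Fin n → Bool,
        |naeVal x - MvPolynomial.eval (fun i => boolToReal (x i)) q| ≤ 1 / 3 := by
  classical
  have hn3 : (3:ℝ) ≤ (n:ℝ) := by exact_mod_cast hn
  have hm1 : (1:ℝ) ≤ (n:ℝ) - 2 := by linarith
  have hm0 : (0:ℝ) < (n:ℝ) - 2 := by linarith
  set m : ℝ := (n:ℝ) - 2 with hmdef
  have hmne : m ≠ 0 := ne_of_gt hm0
  set b : ℝ := (n:ℝ)/m with hbdef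
  have hb1 : 1 < b := by rw [hbdef, lt_div_iff₀ hm0]; linarith
  set r : ℝ := Real.sqrt (b^2 - 1) with hrdef
  have hr0 : 0 ≤ r := Real.sqrt_nonneg _
  have hr2 : r^2 = b^2-1 := Real.sq_sqrt (by nlinarith)
  set θ : ℝ := Real.log (b + r) with hθdef
  have hθ0 : 0 ≤ θ := Real.log_nonneg (by linarith)
  have hcoshθ : Real.cosh θ = b := by
    rw [hθdef, Real.cosh_eq, Real.exp_log (by linarith), Real.exp_neg,
      Real.exp_log (by linarith),
      inv_eq_of_mul_eq_one_right (show (b+r)*(b-r) = 1 by nlinarith [hr2])]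
    ring
  have hθsq : 24 ≤ θ^2*(6*m+2) := by
    have h := cosh_upper12 hθ0
    rw [hcoshθ, hbdef, div_mul_eq_mul_div, div_le_iff₀ hm0] at h
    have hnm : (n:ℝ) = m + 2 := by rw [hmdef]; ring
    nlinarith [h, hnm]
  have hcore : (659/500:ℝ) ≤ (d:ℝ)*θ := core n hn c hc hineq θ hθ0 hθsq d hd
  -- degrees
  have hd1 : 1 ≤ d := by
    rw [hd]
    have : (0:ℝ) < Real.sqrt (c*m) := Real.sqrt_pos.mpr (by positivity)
    have := Nat.ceil_pos.mpr this
    omega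
  set D : ℕ := if Even d then d else d + 1 with hDdef
  have hDeven : Even D := by
    rw [hDdef]; split
    · assumption
    · exact Nat.even_add_one.mpr (by assumption)
  have hdD : d ≤ D := by rw [hDdef]; split <;> omega
  have hD2 : 2 ≤ D := by
    rcases hDeven with ⟨t, ht⟩
    have : 1 ≤ D := le_trans hd1 hdD
    omega
  obtain ⟨e, he⟩ := hDeven
  have he1 : 1 ≤ e := by omega
  set A : ℝ := (Polynomial.Chebyshev.T ℝ (e:ℤ)).eval (2*b^2-1) with hAdef
  have hA : A = Real.cosh ((e:ℝ)*(2*θ)) := by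
    rw [hAdef, show 2*b^2-1 = Real.cosh (2*θ) by
      have h1 := Real.cosh_two_mul θ
      have h2 := Real.cosh_sq_sub_sinh_sq θ
      rw [hcoshθ] at h1 h2
      linarith, T_eval_cosh]
  have hDθ : (659/500:ℝ) ≤ (D:ℝ)*θ := by
    refine le_trans hcore (mul_le_mul_of_nonneg_right ?_ hθ0)
    exact_mod_cast hdD
  have hA2 : 2 ≤ A := by
    rw [hA]
    refine le_trans two_le_cosh_lam (Real.cosh_le_cosh.mpr ?_)
    rw [abs_of_nonneg (by norm_num), abs_of_nonneg (by positivity)]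
    calc (659/500:ℝ) ≤ (D:ℝ)*θ := hDθ
      _ = (e:ℝ)*(2*θ) := by rw [he]; push_cast; ring
  have hA0 : A ≠ 0 := by linarith
  have hβ0 : (0:ℝ) < 2/(3*A) := by positivity
  have hβ13 : 2/(3*A) ≤ 1/3 := by
    rw [div_le_div_iff₀ (by linarith) (by norm_num)]
    linarith
  set W : Polynomial ℝ := Polynomial.C (2/m^2) * (Polynomial.C 2 * Polynomial.X
    - Polynomial.C (n:ℝ))^2 - Polynomial.C 1 with hWdef
  set P : Polynomial ℝ := Polynomial.C 1
    - Polynomial.C (2/(3*A)) * ((Polynomial.Chebyshev.T ℝ (e:ℤ)).comp W) with hPdef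
  set S : MvPolynomial (Fin n) ℝ := ∑ i, MvPolynomial.X i with hSdef
  -- eval facts
  have hWeval : ∀ u : ℝ, W.eval u = 2/m^2*(2*u - n)^2 - 1 := by
    intro u
    rw [hWdef]
    simp
  have hPeval : ∀ u : ℝ, P.eval u
      = 1 - 2/(3*A)*((Polynomial.Chebyshev.T ℝ (e:ℤ)).eval (W.eval u)) := by
    intro u
    rw [hPdef]
    simp [Polynomial.eval_comp]
  -- T degree
  have hTdeg : (Polynomial.Chebyshev.T ℝ (e:ℤ)).natDegree = e := by
    have h := (T_deg (e-1)).1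
    rwa [show ((e-1:ℕ):ℤ)+1 = (e:ℤ) by omega, show e-1+1 = e by omega] at h
  have hW2 : W.natDegree = 2 := by
    rw [hWdef]
    compute_degree!
  have hcompdeg : ((Polynomial.Chebyshev.T ℝ (e:ℤ)).comp W).natDegree = D := by
    rw [Polynomial.natDegree_comp, hTdeg, hW2, he]
    omega
  have hPdeg : P.natDegree = D := by
    rw [hPdef]
    rw [Polynomial.natDegree_sub_eq_right_of_natDegree_lt]
    · rw [Polynomial.natDegree_C_mul (ne_of_gt hβ0), hcompdeg]
    · rw [Polynomial.natDegree_C_mul (ne_of_gt hβ0), hcompdeg, Polynomial.natDegree_C]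
      omega
  have hS1 : S.totalDegree ≤ 1 := by
    rw [hSdef]
    refine le_trans (MvPolynomial.totalDegree_finset_sum _ _) ?_
    exact Finset.sup_le fun i _ => le_of_eq (MvPolynomial.totalDegree_X i)
  refine ⟨Polynomial.aeval S P, ?_, ?_⟩
  · -- total degree
    refine le_antisymm (by rw [← hPdeg] at *; exact totalDegree_poly_aeval_le S hS1 P) ?_
    have i0 : Fin n := ⟨0, by omega⟩
    set g : Fin n → Polynomial ℝ := fun i => if i = (⟨0, by omega⟩ : Fin n) then Polynomial.X else 0 with hgdef
    have hφS : MvPolynomial.aeval g S = Polynomial.X := by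
      rw [hSdef, map_sum]
      simp only [MvPolynomial.aeval_X, hgdef]
      rw [Finset.sum_ite_eq' Finset.univ]
      simp
    have hφq : MvPolynomial.aeval g ((Polynomial.aeval S) P) = P := by
      rw [← Polynomial.aeval_algHom_apply, hφS, Polynomial.aeval_X_left_apply]
    have hg1 : ∀ i, (g i).natDegree ≤ 1 := by
      intro i
      show (if i = (⟨0, by omega⟩ : Fin n) then Polynomial.X else 0).natDegree ≤ 1
      rcases eq_or_ne i (⟨0, by omega⟩ : Fin n) with h | h <;> simp [h]
    have := natDegree_mv_aeval_le g hg1 ((Polynomial.aeval S) P)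
    rw [hφq, hPdeg] at this
    exact this
  · -- approximation
    intro x
    have heval : MvPolynomial.eval (fun i => boolToReal (x i)) ((Polynomial.aeval S) P)
        = P.eval (∑ i, boolToReal (x i)) := by
      have h1 : MvPolynomial.eval (fun i => boolToReal (x i)) ((Polynomial.aeval S) P)
          = MvPolynomial.aeval (fun i => boolToReal (x i)) ((Polynomial.aeval S) P) := by
        rw [← MvPolynomial.coe_aeval_eq_eval]
        rfl
      rw [h1, ← Polynomial.aeval_algHom_apply]
      have h2 : MvPolynomial.aeval (fun i => boolToReal (x i)) S = ∑ i, boolToReal (x i) := by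
        rw [hSdef, map_sum]
        simp
      rw [h2]
      exact congrFun (Polynomial.coe_aeval_eq_eval _) P
    rw [heval]
    set t : ℝ := ∑ i, boolToReal (x i) with htdef
    have htnonneg : ∀ i, (0:ℝ) ≤ boolToReal (x i) := by
      intro i; rw [boolToReal]; split <;> norm_num
    have htle1 : ∀ i, boolToReal (x i) ≤ 1 := by
      intro i; rw [boolToReal]; split <;> norm_num
    by_cases hall : ∀ i j : Fin n, x i = x j
    · rw [naeVal, if_pos hall]
      have i0 : Fin n := ⟨0, by omega⟩
      have hWt : W.eval t = 2*b^2 - 1 := by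
        have ht : t = 0 ∨ t = (n:ℝ) := by
          cases hx0 : x ⟨0, by omega⟩ with
          | false =>
            left
            rw [htdef]
            apply Finset.sum_eq_zero
            intro i _
            rw [hall i ⟨0, by omega⟩, hx0, boolToReal]
            norm_num
          | true =>
            right
            rw [htdef]
            have : ∀ i, boolToReal (x i) = 1 := by
              intro i
              rw [hall i ⟨0, by omega⟩, hx0, boolToReal]
              norm_num
            rw [Finset.sum_congr rfl (fun i _ => this i)]
            simp
        have hb2 : 2/m^2*((n:ℝ))^2 - 1 = 2*b^2-1 := by
          rw [hbdef]
          field_simp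
        rcases ht with h0 | h0 <;> rw [h0, hWeval, ← hb2] <;> ring_nf
      rw [hPeval, hWt, ← hAdef]
      have : 2/(3*A)*A = 2/3 := by field_simp
      rw [this]
      rw [abs_le]
      norm_num
    · rw [naeVal, if_neg hall]
      push_neg at hall
      obtain ⟨i, j, hij⟩ := hall
      have hex : (∃ i, x i = true) ∧ (∃ j, x j = false) := by
        cases hxi : x i <;> cases hxj : x j
        · rw [hxi, hxj] at hij; simp at hij
        · exact ⟨⟨j, hxj⟩, ⟨i, hxi⟩⟩
        · exact ⟨⟨i, hxi⟩, ⟨j, hxj⟩⟩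
        · rw [hxi, hxj] at hij; simp at hij
      obtain ⟨⟨it, hit⟩, ⟨jf, hjf⟩⟩ := hex
      have hbt : boolToReal true = 1 := by rw [boolToReal]; norm_num
      have h1t : 1 ≤ t := by
        have h := Finset.single_le_sum (f := fun i => boolToReal (x i))
          (fun i _ => htnonneg i) (Finset.mem_univ it)
        have h' : boolToReal (x it) ≤ t := h
        rw [hit, hbt] at h'
        exact h'
      have htn1 : t ≤ (n:ℝ) - 1 := by
        have hsum : ∑ i : Fin n, (1 - boolToReal (x i)) = (n:ℝ) - t := by
          rw [htdef, Finset.sum_sub_distrib]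
          simp [Finset.card_univ]
        have hbf : boolToReal false = 0 := by rw [boolToReal]; norm_num
        have h := Finset.single_le_sum (f := fun i => 1 - boolToReal (x i))
          (fun i _ => by show (0:ℝ) ≤ 1 - boolToReal (x i); linarith [htle1 i])
          (Finset.mem_univ jf)
        have h' : 1 - boolToReal (x jf) ≤ ∑ i : Fin n, (1 - boolToReal (x i)) := h
        rw [hjf, hbf, hsum] at h'
        linarith
      have hy1 : -1 ≤ W.eval t := by
        rw [hWeval]
        have : (0:ℝ) ≤ 2/m^2*(2*t - n)^2 := by positivity
        linarith
      have hy2 : W.eval t ≤ 1 := by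
        rw [hWeval]
        have hnm : (n:ℝ) = m + 2 := by rw [hmdef]; ring
        have habs : (2*t - n)^2 ≤ m^2 := by nlinarith [h1t, htn1, hnm]
        have h2 : 2/m^2*(2*t-n)^2 ≤ 2/m^2*m^2 := by
          apply mul_le_mul_of_nonneg_left habs (by positivity)
        have h3 : 2/m^2*m^2 = 2 := by field_simp
        linarith
      rw [hPeval]
      have hTb := T_abs_le e (W.eval t) hy1 hy2
      have : |(1:ℝ) - (1 - 2/(3*A)*((Polynomial.Chebyshev.T ℝ (e:ℤ)).eval (W.eval t)))|
          = 2/(3*A)*|(Polynomial.Chebyshev.T ℝ (e:ℤ)).eval (W.eval t)| := by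
        rw [show (1:ℝ) - (1 - 2/(3*A)*((Polynomial.Chebyshev.T ℝ (e:ℤ)).eval (W.eval t)))
          = 2/(3*A)*((Polynomial.Chebyshev.T ℝ (e:ℤ)).eval (W.eval t)) by ring,
          abs_mul, abs_of_pos hβ0]
      rw [this]
      calc 2/(3*A)*|(Polynomial.Chebyshev.T ℝ (e:ℤ)).eval (W.eval t)|
          ≤ 2/(3*A)*1 := mul_le_mul_of_nonneg_left hTb hβ0.le
        _ = 2/(3*A) := mul_one _
        _ ≤ 1/3 := hβ13
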